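/- Fix n ≥ 1 and let Qₙ(x) = x₁²+⋯+xₙ² be the positive-definite quadratic form on ℝⁿ. Let Pinₙ be the subgroup of units of the real Clifford algebra Cl(Qₙ) generated by the images ι(v) of unit vectors, and let Spinₙ ⊂ Pinₙ be the subgroup generated by the products ι(v)·ι(w) of pairs of unit vectors; it contains the central element −1. Let Sp(1) denote the multiplicative group of unit quaternions in ℍ. Then the map Spinₙ × Sp(1) → (Cl(Qₙ) ⊗_ℝ ℍ)ˣ given by (g, λ) ↦ g ⊗ λ is a group homomorphism whose kernel is exactly {(1,1), (−1,−1)}; in particular it induces an injective group homomorphism from the quotient (Spinₙ × Sp(1))/⟨(−1,−1)⟩ into the unit group of Cl(Qₙ) ⊗_ℝ ℍ. -/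

import Mathlib

open scoped TensorProduct Quaternion

noncomputable section

/-- The standard positive definite quadratic form `Qₙ(x) = x₁² + ⋯ + xₙ²` on `ℝⁿ`. -/
def Qeuc (n : ℕ) : QuadraticForm ℝ (Fin n → ℝ) :=
  QuadraticMap.weightedSumSquares ℝ (fun _ : Fin n => (1 : ℝ))

/-- `Spinₙ`: the subgroup of the unit group of the Clifford algebra `Cl(Qₙ)` generated by the
products `ι v * ι w` of pairs of unit vectors. -/
def SpinG (n : ℕ) : Subgroup (CliffordAlgebra (Qeuc n))ˣ :=
  Subgroup.closure {u | ∃ v w : Fin n → ℝ, Qeuc n v = 1 ∧ Qeuc n w = 1 ∧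
    (u : CliffordAlgebra (Qeuc n)) =
      CliffordAlgebra.ι (Qeuc n) v * CliffordAlgebra.ι (Qeuc n) w}

/-- The central subgroup `⟨(−1,−1)⟩` of `Spinₙ × Sp(1)`. -/
def ZSpin (n : ℕ) : Subgroup (↥(SpinG n) × ↥(unitary ℍ[ℝ])) :=
  Subgroup.closure {p | ((p.1 : (CliffordAlgebra (Qeuc n))ˣ) = -1) ∧ ((p.2 : ℍ[ℝ]) = -1)}

theorem closure_of_central_normal {G : Type*} [Group G] {S : Set G}
    (hS : S ⊆ (Subgroup.center G : Set G)) : (Subgroup.closure S).Normal := by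
  constructor
  intro x hx g
  have h := Subgroup.mem_center_iff.mp
    ((Subgroup.closure_le (Subgroup.center G)).mpr hS hx) g
  rw [h, mul_inv_cancel_right]
  exact hx

instance (n : ℕ) : (ZSpin n).Normal := by
  apply closure_of_central_normal
  rintro ⟨a, b⟩ ⟨ha, hb⟩
  simp only [SetLike.mem_coe, Subgroup.mem_center_iff]
  rintro ⟨c, d⟩
  refine Prod.ext ?_ ?_
  · refine Subtype.ext ?_
    show (c : (CliffordAlgebra (Qeuc n))ˣ) * a = (a : (CliffordAlgebra (Qeuc n))ˣ) * c
    rw [ha, mul_neg_one, neg_one_mul]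
  · refine Subtype.ext ?_
    show (d : ℍ[ℝ]) * b = (b : ℍ[ℝ]) * d
    rw [hb, mul_neg_one, neg_one_mul]

/-- The basic tensor map as a monoid homomorphism. -/
def Fmap (n : ℕ) : (↥(SpinG n) × ↥(unitary ℍ[ℝ])) →* (CliffordAlgebra (Qeuc n) ⊗[ℝ] ℍ[ℝ]) where
  toFun p := (((p.1 : (CliffordAlgebra (Qeuc n))ˣ) : CliffordAlgebra (Qeuc n)) ⊗ₜ[ℝ]
      ((p.2 : ℍ[ℝ]) : ℍ[ℝ]))
  map_one' := by simp [Algebra.TensorProduct.one_def]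
  map_mul' p q := by
    simp [Prod.fst_mul, Prod.snd_mul, Algebra.TensorProduct.tmul_mul_tmul]

theorem tensor_eq_one {n : ℕ} (a : (CliffordAlgebra (Qeuc n))ˣ) (b : ℍ[ℝ])
    (hb : b ∈ unitary ℍ[ℝ])
    (h : ((a : CliffordAlgebra (Qeuc n)) ⊗ₜ[ℝ] b : CliffordAlgebra (Qeuc n) ⊗[ℝ] ℍ[ℝ]) = 1) :
    ((a : (CliffordAlgebra (Qeuc n))ˣ) = 1 ∧ b = 1) ∨ ((a : (CliffordAlgebra (Qeuc n))ˣ) = -1 ∧ b = -1) := by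
  rw [Algebra.TensorProduct.one_def] at h
  have key : ∀ f : ℍ[ℝ] →ₗ[ℝ] ℝ, f b • (a : CliffordAlgebra (Qeuc n)) = f 1 • (1 : CliffordAlgebra (Qeuc n)) := by
    intro f
    have := congrArg ((TensorProduct.rid ℝ (CliffordAlgebra (Qeuc n))).toLinearMap ∘ₗ
      (LinearMap.lTensor (CliffordAlgebra (Qeuc n)) f)) h
    simpa using this
  have ha0 : (a : CliffordAlgebra (Qeuc n)) ≠ 0 := a.ne_zero
  have hI : b.imI = 0 := by
    have h0 : b.imI • (a : CliffordAlgebra (Qeuc n)) = (1 : ℍ[ℝ]).imI • (1 : CliffordAlgebra (Qeuc n)) :=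
      key (QuaternionAlgebra.imIₗ _ _ _)
    rw [Quaternion.imI_one, zero_smul] at h0
    rcases smul_eq_zero.mp h0 with h' | h' <;> [exact h'; exact absurd h' ha0]
  have hJ : b.imJ = 0 := by
    have h0 : b.imJ • (a : CliffordAlgebra (Qeuc n)) = (1 : ℍ[ℝ]).imJ • (1 : CliffordAlgebra (Qeuc n)) :=
      key (QuaternionAlgebra.imJₗ _ _ _)
    rw [Quaternion.imJ_one, zero_smul] at h0
    rcases smul_eq_zero.mp h0 with h' | h' <;> [exact h'; exact absurd h' ha0]
  have hK : b.imK = 0 := by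
    have h0 : b.imK • (a : CliffordAlgebra (Qeuc n)) = (1 : ℍ[ℝ]).imK • (1 : CliffordAlgebra (Qeuc n)) :=
      key (QuaternionAlgebra.imKₗ _ _ _)
    rw [Quaternion.imK_one, zero_smul] at h0
    rcases smul_eq_zero.mp h0 with h' | h' <;> [exact h'; exact absurd h' ha0]
  have hre : b.re • (a : CliffordAlgebra (Qeuc n)) = 1 := by
    have h0 : b.re • (a : CliffordAlgebra (Qeuc n)) = (1 : ℍ[ℝ]).re • (1 : CliffordAlgebra (Qeuc n)) :=
      key (QuaternionAlgebra.reₗ _ _ _)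
    rwa [Quaternion.re_one, one_smul] at h0
  have hbeq : b = (b.re : ℍ[ℝ]) := by
    ext <;> simp [hI, hJ, hK]
  have hb2 : b.re * b.re = 1 := by
    have hmem := Unitary.mem_iff.mp hb
    have h1 : star b * b = 1 := hmem.1
    have hsb : star b = b := by
      ext <;> simp [hI, hJ, hK]
    rw [hsb] at h1
    have := congrArg QuaternionAlgebra.re h1
    rw [Quaternion.re_mul, hI, hJ, hK] at this
    simpa using this
  rcases mul_self_eq_one_iff.mp hb2 with h1 | h1
  · left
    constructor
    · ext
      have := hre; rw [h1, one_smul] at this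
      simpa using this
    · rw [hbeq, h1]; simp
  · right
    constructor
    · ext
      have := hre; rw [h1] at this
      have h2 : -(a : CliffordAlgebra (Qeuc n)) = 1 := by simpa using this
      have h3 : (a : CliffordAlgebra (Qeuc n)) = -1 := neg_eq_iff_eq_neg.mp h2
      simpa using h3
    · rw [hbeq, h1]; simp

/-- `Spinₙ` contains `−1`, and the map `Spinₙ × Sp(1) → Cl(Qₙ) ⊗ ℍ`, `(g, λ) ↦ g ⊗ λ`, is a
group homomorphism (into the multiplicative monoid, landing in the units) whose kernel is
exactly `{(1,1), (−1,−1)}`; in particular it induces an injective group homomorphism from the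
quotient `(Spinₙ × Sp(1))/⟨(−1,−1)⟩` into the unit group of `Cl(Qₙ) ⊗ ℍ`. -/
theorem spin_mul_sp1_embeds_in_clifford_tensor_quaternions (n : ℕ) (hn : 1 ≤ n) :
    ((-1 : (CliffordAlgebra (Qeuc n))ˣ) ∈ SpinG n) ∧
    ∃ F : (↥(SpinG n) × ↥(unitary ℍ[ℝ])) →* (CliffordAlgebra (Qeuc n) ⊗[ℝ] ℍ[ℝ]),
      (∀ p : ↥(SpinG n) × ↥(unitary ℍ[ℝ]),
        F p = (((p.1 : (CliffordAlgebra (Qeuc n))ˣ) : CliffordAlgebra (Qeuc n)) ⊗ₜ[ℝ]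
          ((p.2 : ℍ[ℝ]) : ℍ[ℝ]))) ∧
      (∀ p : ↥(SpinG n) × ↥(unitary ℍ[ℝ]),
        F p = 1 ↔ p = 1 ∨
          (((p.1 : (CliffordAlgebra (Qeuc n))ˣ) = -1) ∧ ((p.2 : ℍ[ℝ]) = -1))) ∧
      ∃ G : ((↥(SpinG n) × ↥(unitary ℍ[ℝ])) ⧸ ZSpin n) →*
          (CliffordAlgebra (Qeuc n) ⊗[ℝ] ℍ[ℝ])ˣ,
        Function.Injective G ∧
        ∀ p : ↥(SpinG n) × ↥(unitary ℍ[ℝ]),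
          ((G (QuotientGroup.mk p) : (CliffordAlgebra (Qeuc n) ⊗[ℝ] ℍ[ℝ])ˣ) :
            CliffordAlgebra (Qeuc n) ⊗[ℝ] ℍ[ℝ]) = F p := by
  have hneg : (-1 : (CliffordAlgebra (Qeuc n))ˣ) ∈ SpinG n := by
    apply Subgroup.subset_closure
    refine ⟨Pi.single ⟨0, hn⟩ 1, -(Pi.single ⟨0, hn⟩ 1), ?_, ?_, ?_⟩
    · simp [Qeuc, QuadraticMap.weightedSumSquares_apply, Pi.single_apply]
    · rw [QuadraticMap.map_neg]
      simp [Qeuc, QuadraticMap.weightedSumSquares_apply, Pi.single_apply]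
    · rw [map_neg, mul_neg, CliffordAlgebra.ι_sq_scalar, Units.val_neg, Units.val_one]
      simp [Qeuc, QuadraticMap.weightedSumSquares_apply, Pi.single_apply, Units.val_neg, Units.val_one]
      exact congrArg Neg.neg (map_one (algebraMap ℝ (CliffordAlgebra (Qeuc n)))).symm
  refine ⟨hneg, Fmap n, fun p => rfl, ?_, ?_⟩
  · -- kernel characterization
    intro p
    constructor
    · intro h
      rcases tensor_eq_one p.1.1 p.2.1 p.2.2 h with ⟨h1, h2⟩ | ⟨h1, h2⟩
      · left
        refine Prod.ext (Subtype.ext h1) (Subtype.ext h2)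
      · right; exact ⟨h1, h2⟩
    · rintro (rfl | ⟨h1, h2⟩)
      · exact map_one _
      · show ((p.1 : (CliffordAlgebra (Qeuc n))ˣ) : CliffordAlgebra (Qeuc n)) ⊗ₜ[ℝ]
          ((p.2 : ℍ[ℝ]) : ℍ[ℝ]) = 1
        rw [h2, Units.ext_iff.mp h1]
        simp [Algebra.TensorProduct.one_def, TensorProduct.neg_tmul, TensorProduct.tmul_neg]
  · -- quotient
    have hker : ∀ x ∈ ZSpin n, (Fmap n).toHomUnits x = 1 := by
      intro x hx
      refine Subgroup.closure_induction ?_ (map_one _)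
        (fun x y _ _ hx hy => by rw [map_mul, hx, hy, mul_one])
        (fun x _ hx => by rw [map_inv, hx, inv_one]) hx
      rintro q ⟨h1, h2⟩
      ext
      show ((q.1 : (CliffordAlgebra (Qeuc n))ˣ) : CliffordAlgebra (Qeuc n)) ⊗ₜ[ℝ]
        ((q.2 : ℍ[ℝ]) : ℍ[ℝ]) = 1
      rw [h2, Units.ext_iff.mp h1]
      simp [Algebra.TensorProduct.one_def, TensorProduct.neg_tmul, TensorProduct.tmul_neg]
    refine ⟨QuotientGroup.lift (ZSpin n) (Fmap n).toHomUnits (fun x hx => MonoidHom.mem_ker.mpr (hker x hx)), ?_, ?_⟩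
    · rw [injective_iff_map_eq_one]
      intro q hq
      induction q using QuotientGroup.induction_on with
      | H p =>
        rw [QuotientGroup.lift_mk] at hq
        have hFp : Fmap n p = 1 := by
          have := Units.ext_iff.mp hq
          simpa using this
        rcases tensor_eq_one p.1.1 p.2.1 p.2.2 hFp with ⟨h1, h2⟩ | ⟨h1, h2⟩
        · have : p = 1 := Prod.ext (Subtype.ext h1) (Subtype.ext h2)
          rw [this, QuotientGroup.mk_one]
        · rw [QuotientGroup.eq_one_iff]
          exact Subgroup.subset_closure ⟨h1, h2⟩
    · intro p
      rw [QuotientGroup.lift_mk]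
      exact MonoidHom.coe_toHomUnits _ _

end
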